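/- For each j ∈ {0,...,n-1}, the sum of k/(2^n-1) over all k ∈ {0,...,2^n-1} whose n-bit binary representation has exactly j zeros equals the binomial coefficient C(n-1, j). -/

import Mathlib

/-- number of ones in the binary representation of `k` -/
def ones (k : ℕ) : ℕ := (Nat.digits 2 k).sum

lemma ones_rec (k : ℕ) : ones k = k % 2 + ones (k / 2) := by
  rcases Nat.eq_zero_or_pos k with h | h
  · simp [h, ones]
  · unfold ones; rw [Nat.digits_def' (by norm_num) h]; simp

lemma ones_add_pow {n k : ℕ} (hk : k < 2 ^ n) : ones (2 ^ n + k) = ones k + 1 := by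
  induction n generalizing k with
  | zero =>
    interval_cases k
    simp [ones]
  | succ n ih =>
    rw [ones_rec (2 ^ (n+1) + k), ones_rec k]
    have h2 : (2 ^ (n+1) + k) % 2 = k % 2 := by omega
    have h3 : (2 ^ (n+1) + k) / 2 = 2 ^ n + k / 2 := by
      rw [pow_succ]; omega
    rw [h2, h3, ih (by rw [pow_succ] at hk; omega)]
    ring

lemma ones_le {n k : ℕ} (hk : k < 2 ^ n) : ones k ≤ n := by
  induction n generalizing k with
  | zero => interval_cases k; simp [ones]
  | succ n ih =>
    rw [ones_rec k]
    have : k / 2 < 2 ^ n := by rw [pow_succ] at hk; omega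
    have := ih this
    omega

lemma card_ones (n m : ℕ) :
    ((Finset.range (2 ^ n)).filter (fun k => ones k = m)).card = n.choose m := by
  induction n generalizing m with
  | zero =>
    simp only [pow_zero, Finset.range_one]
    rcases m with _ | m
    · rw [Finset.filter_singleton]; simp [ones]
    · rw [Finset.filter_singleton]
      simp only [ones, Nat.digits_zero, List.sum_nil]
      rw [if_neg (by omega)]
      simp
  | succ n ih =>
    have hsplit : ∀ (f : ℕ → ℕ),
        ∑ k ∈ Finset.range (2 ^ (n+1)), f k
          = ∑ k ∈ Finset.range (2 ^ n), f k + ∑ k ∈ Finset.range (2 ^ n), f (2 ^ n + k) := by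
      intro f
      rw [pow_succ, mul_two, Finset.sum_range_add]
    rw [Finset.card_filter, hsplit, ← Finset.card_filter]
    have : ∀ k ∈ Finset.range (2 ^ n),
        (if ones (2 ^ n + k) = m then 1 else 0) = if ones k + 1 = m then 1 else 0 := by
      intro k hk
      rw [ones_add_pow (Finset.mem_range.mp hk)]
    rw [Finset.sum_congr rfl this]
    rcases m with _ | m
    · simp [ih]
    · have : ∀ k ∈ Finset.range (2 ^ n),
          (if ones k + 1 = m + 1 then (1:ℕ) else 0) = if ones k = m then 1 else 0 := by
        intro k _; simp
      rw [Finset.sum_congr rfl this, ← Finset.card_filter, ih, ih, Nat.choose_succ_succ]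
      exact Nat.add_comm _ _

lemma ones_eq_zero : ∀ k : ℕ, ones k = 0 → k = 0 := by
  intro k
  induction k using Nat.strong_induction_on with
  | _ k ih =>
    intro h
    rcases Nat.eq_zero_or_pos k with rfl | hk
    · rfl
    · rw [ones_rec] at h
      have h2 : k / 2 = 0 := ih (k / 2) (by omega) (by omega)
      omega

lemma key (n m : ℕ) (hm : 1 ≤ m) :
    ∑ k ∈ (Finset.range (2 ^ n)).filter (fun k => ones k = m), k
      = (n - 1).choose (m - 1) * (2 ^ n - 1) := by
  induction n generalizing m with
  | zero => simp
  | succ n ih =>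
    rcases Nat.eq_zero_or_pos n with rfl | hn
    · have hr : Finset.range (2 ^ 1) = {0, 1} := by decide
      have h0 : ones 0 = 0 := by simp [ones]
      have h1 : ones 1 = 1 := by rw [ones_rec]; simp [ones]
      rw [hr, Finset.filter_insert, if_neg (by rw [h0]; omega), Finset.filter_singleton, h1]
      rcases eq_or_ne m 1 with rfl | hm1
      · simp
      · rw [if_neg (Ne.symm hm1)]
        simp [Nat.choose_eq_zero_of_lt (show 0 < m - 1 by omega)]
    · have hsplit :
          ∑ k ∈ Finset.range (2 ^ (n+1)), (if ones k = m then k else 0)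
            = ∑ k ∈ Finset.range (2 ^ n), (if ones k = m then k else 0)
              + ∑ k ∈ Finset.range (2 ^ n), (if ones (2 ^ n + k) = m then 2 ^ n + k else 0) := by
        rw [pow_succ, mul_two, Finset.sum_range_add]
      rw [Finset.sum_filter, hsplit]
      have hcong : ∀ k ∈ Finset.range (2 ^ n),
          (if ones (2 ^ n + k) = m then 2 ^ n + k else 0)
            = (if ones k = m - 1 then 2 ^ n else 0) + (if ones k = m - 1 then k else 0) := by
        intro k hk
        rw [ones_add_pow (Finset.mem_range.mp hk)]
        rcases eq_or_ne (ones k) (m - 1) with h | h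
        · rw [if_pos (by omega), if_pos h, if_pos h]
        · rw [if_neg (by omega), if_neg h, if_neg h]
      rw [Finset.sum_congr rfl hcong, Finset.sum_add_distrib,
          ← Finset.sum_filter (fun k => ones k = m) (fun k => k),
          ← Finset.sum_filter (fun k => ones k = m - 1) (fun k => k),
          ← Finset.sum_filter (fun k => ones k = m - 1) (fun _ => 2 ^ n),
          Finset.sum_const, card_ones, smul_eq_mul, ih m hm]
      rcases eq_or_ne m 1 with rfl | hm1
      · have hz : ∑ k ∈ (Finset.range (2 ^ n)).filter (fun k => ones k = 1 - 1), k = 0 := by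
          apply Finset.sum_eq_zero
          intro k hk
          exact ones_eq_zero k (Finset.mem_filter.mp hk).2
        rw [hz]
        have h2n : 1 ≤ 2 ^ n := Nat.one_le_two_pow
        have h2n1 : 1 ≤ 2 ^ (n + 1) := Nat.one_le_two_pow
        simp only [Nat.choose_zero_right, Nat.sub_self, Nat.add_sub_cancel]
        zify [h2n, h2n1]
        push_cast [pow_succ]
        ring
      · rw [ih (m - 1) (by omega)]
        obtain ⟨p, rfl⟩ : ∃ p, n = p + 1 := ⟨n - 1, by omega⟩
        obtain ⟨q, rfl⟩ : ∃ q, m = q + 2 := ⟨m - 2, by omega⟩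
        simp only [Nat.add_sub_cancel, show q + 2 - 1 = q + 1 by omega,
          show q + 1 - 1 = q by omega, Nat.choose_succ_succ p]
        have h2n : 1 ≤ 2 ^ (p + 1) := Nat.one_le_two_pow
        have h2n1 : 1 ≤ 2 ^ (p + 1 + 1) := Nat.one_le_two_pow
        zify [h2n, h2n1]
        push_cast [pow_succ]
        ring

theorem j_zeros_strings_sum (n j : ℕ) (hn : 1 ≤ n) (hj : j < n) :
    ∑ k ∈ (Finset.range (2 ^ n)).filter (fun k => n - ones k = j),
      ((k : ℝ) / (2 ^ n - 1)) = ((n - 1).choose j : ℝ) := by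
  have hfil : (Finset.range (2 ^ n)).filter (fun k => n - ones k = j)
      = (Finset.range (2 ^ n)).filter (fun k => ones k = n - j) := by
    apply Finset.filter_congr
    intro k hk
    have := ones_le (Finset.mem_range.mp hk)
    constructor <;> (intro h; omega)
  rw [hfil, ← Finset.sum_div, ← Nat.cast_sum]
  rw [key n (n - j) (by omega)]
  have hch : (n - 1).choose (n - j - 1) = (n - 1).choose j := by
    rw [show n - j - 1 = (n - 1) - j by omega, Nat.choose_symm (by omega)]
  rw [hch]
  have h2 : (2:ℝ) ^ n - 1 ≠ 0 := by
    have : (2:ℝ) ≤ 2 ^ n := by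
      calc (2:ℝ) = 2 ^ 1 := by norm_num
      _ ≤ 2 ^ n := by apply pow_le_pow_right₀ (by norm_num) hn
    linarith
  have h1 : 1 ≤ 2 ^ n := Nat.one_le_two_pow
  push_cast [h1]
  field_simp
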